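/- Let α be irrational, k ≥ 2 and 0 < l ≤ a_k, and let n be an integer with 0 < n < q_{k,l}. If ‖nα‖ < ‖q_{k,l-1}α‖, then n = m·q_{k-1} for some integer m with 1 ≤ m ≤ min(l, a_k − l + 1). -/

import Mathlib

/-- The Gauss map iterates: `gaussIter α n` is the `n`-th complete quotient of `α`. -/
noncomputable def gaussIter (α : ℝ) : ℕ → ℝ :=
  fun n => (fun x : ℝ => (Int.fract x)⁻¹)^[n] α

/-- The partial quotients of the continued fraction expansion of `α`:
`α = [cfA α 0; cfA α 1, cfA α 2, …]`. -/
noncomputable def cfA (α : ℝ) (n : ℕ) : ℤ := ⌊gaussIter α n⌋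

/-- The denominators `q_k` of the convergents of `α`. -/
noncomputable def cfQ (α : ℝ) : ℕ → ℤ
  | 0 => 1
  | 1 => cfA α 1
  | (n + 2) => cfA α (n + 2) * cfQ α (n + 1) + cfQ α n

/-- The numerators `p_k` of the convergents of `α`. -/
noncomputable def cfP (α : ℝ) : ℕ → ℤ
  | 0 => cfA α 0
  | 1 => cfA α 1 * cfA α 0 + 1
  | (n + 2) => cfA α (n + 2) * cfP α (n + 1) + cfP α n

/-- `‖x‖`, the distance from `x` to the nearest integer. -/
noncomputable def dnear (x : ℝ) : ℝ := min (Int.fract x) (1 - Int.fract x)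

noncomputable def bprod (α : ℝ) (n : ℕ) : ℝ :=
  ∏ i ∈ Finset.range (n + 1), Int.fract (gaussIter α i)

theorem gaussIter_succ (α : ℝ) (n : ℕ) :
    gaussIter α (n + 1) = (Int.fract (gaussIter α n))⁻¹ := by
  simp [gaussIter, Function.iterate_succ_apply']

theorem gaussIter_irrational (α : ℝ) (hα : Irrational α) (n : ℕ) :
    Irrational (gaussIter α n) := by
  induction n with
  | zero => exact hα
  | succ n ih =>
    rw [gaussIter_succ, ← Int.self_sub_floor]
    exact (ih.sub_intCast _).inv

theorem fract_gauss_pos (α : ℝ) (hα : Irrational α) (n : ℕ) :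
    0 < Int.fract (gaussIter α n) :=
  Int.fract_pos.mpr ((gaussIter_irrational α hα n).ne_int _)

theorem bprod_pos (α : ℝ) (hα : Irrational α) (n : ℕ) : 0 < bprod α n :=
  Finset.prod_pos fun i _ => fract_gauss_pos α hα i

theorem bprod_succ (α : ℝ) (n : ℕ) :
    bprod α (n + 1) = bprod α n * Int.fract (gaussIter α (n + 1)) :=
  Finset.prod_range_succ _ _

theorem bprod_lt (α : ℝ) (hα : Irrational α) (n : ℕ) : bprod α (n + 1) < bprod α n := by
  rw [bprod_succ]
  nlinarith [bprod_pos α hα n, Int.fract_lt_one (gaussIter α (n + 1)),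
    fract_gauss_pos α hα (n + 1)]

theorem cfA_pos (α : ℝ) (hα : Irrational α) (n : ℕ) : 1 ≤ cfA α (n + 1) := by
  have h1 := fract_gauss_pos α hα n
  have h2 := Int.fract_lt_one (gaussIter α n)
  have h3 : (1 : ℝ) ≤ (Int.fract (gaussIter α n))⁻¹ := by
    have h4 : Int.fract (gaussIter α n) * (Int.fract (gaussIter α n))⁻¹ = 1 :=
      mul_inv_cancel₀ h1.ne'
    nlinarith [inv_pos.mpr h1]
  have : (1 : ℤ) ≤ ⌊gaussIter α (n + 1)⌋ := by
    apply Int.le_floor.mpr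
    rw [gaussIter_succ]
    exact_mod_cast h3
  exact this

theorem cfQ_one_le (α : ℝ) (hα : Irrational α) : ∀ n, 1 ≤ cfQ α n
  | 0 => le_refl 1
  | 1 => cfA_pos α hα 0
  | (n + 2) => by
    have h1 := cfQ_one_le α hα (n + 1)
    have h0 := cfQ_one_le α hα n
    have ha := cfA_pos α hα (n + 1)
    simp only [cfQ]
    nlinarith

theorem cfQ_mono (α : ℝ) (hα : Irrational α) : ∀ n, cfQ α n ≤ cfQ α (n + 1)
  | 0 => by
    simp only [cfQ]
    exact cfA_pos α hα 0
  | (n + 1) => by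
    have h1 := cfQ_one_le α hα n
    have h2 := cfQ_one_le α hα (n + 1)
    have ha := cfA_pos α hα (n + 1)
    simp only [cfQ]
    nlinarith

theorem theta_eq (α : ℝ) (hα : Irrational α) :
    ∀ n, (cfQ α n : ℝ) * α - (cfP α n : ℝ) = (-1) ^ n * bprod α n
  | 0 => by
    have hg : gaussIter α 0 = α := rfl
    simp [cfQ, cfP, cfA, bprod, Finset.prod_range_one, hg, Int.self_sub_floor]
  | 1 => by
    have hg : gaussIter α 0 = α := rfl
    have hb : Int.fract α ≠ 0 := by
      have := fract_gauss_pos α hα 0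
      rw [hg] at this
      exact this.ne'
    have e1 : Int.fract (gaussIter α 1) = (Int.fract α)⁻¹ - (cfA α 1 : ℝ) := by
      conv_lhs => rw [← Int.self_sub_floor]
      simp only [cfA]
      rw [gaussIter_succ, hg]
    have hb' : Int.fract α = α - (cfA α 0 : ℝ) := by
      simp only [cfA]
      rw [show gaussIter α 0 = α from rfl]
      exact (Int.self_sub_floor α).symm
    simp only [cfQ, cfP, bprod, Finset.prod_range_succ, Finset.prod_range_one, e1,
      show gaussIter α 0 = α from rfl]
    push_cast
    rw [hb'] at hb ⊢
    field_simp
    ring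
  | (n + 2) => by
    have hc : Int.fract (gaussIter α (n + 1)) ≠ 0 := (fract_gauss_pos α hα (n + 1)).ne'
    have e2 : Int.fract (gaussIter α (n + 2)) =
        (Int.fract (gaussIter α (n + 1)))⁻¹ - (cfA α (n + 2) : ℝ) := by
      conv_lhs => rw [← Int.self_sub_floor]
      simp only [cfA]
      rw [gaussIter_succ]
    have h0 := theta_eq α hα n
    have h1 := theta_eq α hα (n + 1)
    rw [bprod_succ α n] at h1
    simp only [cfQ, cfP]
    rw [bprod_succ α (n + 1), bprod_succ α n, e2]
    push_cast
    linear_combination (cfA α (n + 2) : ℝ) * h1 + h0 -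
      (-1 : ℝ) ^ n * bprod α n * (mul_inv_cancel₀ hc)

theorem cfDet (α : ℝ) : ∀ n, (cfP α n * cfQ α (n + 1) - cfP α (n + 1) * cfQ α n) *
    (cfP α n * cfQ α (n + 1) - cfP α (n + 1) * cfQ α n) = 1
  | 0 => by
    simp only [cfP, cfQ]
    ring
  | (n + 1) => by
    have h := cfDet α n
    simp only [cfP, cfQ]
    linear_combination h

theorem dnear_le (x : ℝ) (m : ℤ) : dnear x ≤ |x - m| := by
  rcases le_or_gt m ⌊x⌋ with h | h
  · have h' : (m : ℝ) ≤ (⌊x⌋ : ℝ) := by exact_mod_cast h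
    calc dnear x ≤ Int.fract x := min_le_left _ _
      _ ≤ x - m := by rw [← Int.self_sub_floor]; linarith
      _ ≤ |x - m| := le_abs_self _
  · have h' : ((⌊x⌋ : ℝ) + 1) ≤ m := by exact_mod_cast h
    calc dnear x ≤ 1 - Int.fract x := min_le_right _ _
      _ ≤ (m : ℝ) - x := by rw [← Int.self_sub_floor]; linarith
      _ ≤ |x - m| := by rw [abs_sub_comm]; exact le_abs_self _

theorem dnear_exists (x : ℝ) : ∃ m : ℤ, dnear x = |x - m| := by
  rcases le_total (Int.fract x) (1 - Int.fract x) with h | h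
  · refine ⟨⌊x⌋, ?_⟩
    rw [dnear, min_eq_left h, Int.self_sub_floor, abs_of_nonneg (Int.fract_nonneg x)]
  · refine ⟨⌊x⌋ + 1, ?_⟩
    rw [dnear, min_eq_right h, abs_sub_comm]
    have h2 : ((⌊x⌋ + 1 : ℤ) : ℝ) - x = 1 - Int.fract x := by
      push_cast
      rw [← Int.self_sub_floor]
      ring
    rw [h2, abs_of_nonneg (by linarith [Int.fract_lt_one x])]

set_option maxHeartbeats 800000 in
/-- Let `α` be irrational, `k ≥ 2`, `0 < l ≤ a_k` and `0 < n < q_{k,l}`.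
If `‖nα‖ < ‖q_{k,l-1}α‖`, then `n = m·q_{k-1}` with `1 ≤ m ≤ min l (a_k − l + 1)`. -/
theorem closest_point_is_multiple (α : ℝ) (hα : Irrational α) (k : ℕ) (hk : 2 ≤ k)
    (l : ℤ) (hl0 : 0 < l) (hl : l ≤ cfA α k) (n : ℤ) (hn0 : 0 < n)
    (hn : n < l * cfQ α (k - 1) + cfQ α (k - 2))
    (hdist : dnear (n * α) < dnear (((l - 1) * cfQ α (k - 1) + cfQ α (k - 2)) * α)) :
    ∃ m : ℤ, n = m * cfQ α (k - 1) ∧ 1 ≤ m ∧ m ≤ min l (cfA α k - l + 1) := by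
  obtain ⟨j, rfl⟩ : ∃ j, k = j + 2 := ⟨k - 2, by omega⟩
  simp only [show j + 2 - 1 = j + 1 from rfl, show j + 2 - 2 = j from rfl] at hn hdist ⊢
  have hθ0 := theta_eq α hα j
  have hθ1 := theta_eq α hα (j + 1)
  have hθ2 := theta_eq α hα (j + 2)
  simp only [cfQ, cfP] at hθ2
  set a : ℤ := cfA α (j + 2) with ha
  set q1 : ℤ := cfQ α (j + 1) with hq1d
  set q0 : ℤ := cfQ α j with hq0d
  set p1 : ℤ := cfP α (j + 1) with hp1d
  set p0 : ℤ := cfP α j with hp0d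
  have hq1 : 1 ≤ q1 := cfQ_one_le α hα (j + 1)
  have hq0 : 1 ≤ q0 := cfQ_one_le α hα j
  have hq01 : q0 ≤ q1 := cfQ_mono α hα j
  have hD : (p0 * q1 - p1 * q0) * (p0 * q1 - p1 * q0) = 1 := cfDet α j
  have hB0 : 0 < bprod α j := bprod_pos α hα j
  have hB1 : 0 < bprod α (j + 1) := bprod_pos α hα (j + 1)
  have hB2 : 0 < bprod α (j + 2) := bprod_pos α hα (j + 2)
  have hlt2 : bprod α (j + 2) < bprod α (j + 1) := bprod_lt α hα (j + 1)
  push_cast at hθ0 hθ1 hθ2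
  rw [pow_succ] at hθ1
  rw [pow_succ, pow_succ] at hθ2
  obtain ⟨e, he, hee, habse⟩ : ∃ e : ℝ, (-1 : ℝ) ^ j = e ∧ e * e = 1 ∧ |e| = 1 :=
    ⟨(-1) ^ j, rfl, by rw [← mul_pow]; norm_num, by rw [abs_pow]; norm_num⟩
  rw [he] at hθ0 hθ1 hθ2
  -- the recurrence δ₀ = a δ₁ + δ₂
  have hrec : bprod α j = (a : ℝ) * bprod α (j + 1) + bprod α (j + 2) := by
    linear_combination e * hθ2 - e * (a : ℝ) * hθ1 - e * hθ0 +
      ((a : ℝ) * bprod α (j + 1) + bprod α (j + 2) - bprod α j) * hee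
  have hlR : (1 : ℝ) ≤ (l : ℝ) := by exact_mod_cast hl0
  have hlaR : (l : ℝ) ≤ (a : ℝ) := by exact_mod_cast hl
  -- the target value
  have hX : 0 < bprod α j - ((l : ℝ) - 1) * bprod α (j + 1) := by
    linarith only [mul_nonneg (sub_nonneg.mpr hlaR) hB1.le, hrec, hB1, hB2]
  have htarget : dnear ((((l:ℝ) - 1) * (q1:ℝ) + (q0:ℝ)) * α) ≤
      bprod α j - ((l : ℝ) - 1) * bprod α (j + 1) := by
    have h := dnear_le ((((l:ℝ) - 1) * (q1:ℝ) + (q0:ℝ)) * α) ((l - 1) * p1 + p0)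
    have e1 : (((l:ℝ) - 1) * (q1:ℝ) + (q0:ℝ)) * α - (((l - 1) * p1 + p0 : ℤ) : ℝ) =
        e * (bprod α j - ((l : ℝ) - 1) * bprod α (j + 1)) := by
      push_cast
      linear_combination ((l : ℝ) - 1) * hθ1 + hθ0
    rw [e1, abs_mul, habse, one_mul, abs_of_nonneg hX.le] at h
    exact h
  obtain ⟨mstar, hm⟩ := dnear_exists ((n : ℝ) * α)
  obtain ⟨s, t, hst, hstm⟩ : ∃ s t : ℤ, s * q1 + t * q0 = n ∧ s * p1 + t * p0 = mstar :=
    ⟨(p0 * q1 - p1 * q0) * (p0 * n - q0 * mstar),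
     (p0 * q1 - p1 * q0) * (q1 * mstar - p1 * n),
     by linear_combination n * hD, by linear_combination mstar * hD⟩
  have h1' : (s : ℝ) * q1 + (t : ℝ) * q0 = (n : ℝ) := by exact_mod_cast hst
  have h2' : (s : ℝ) * p1 + (t : ℝ) * p0 = (mstar : ℝ) := by exact_mod_cast hstm
  have hkey : (n : ℝ) * α - (mstar : ℝ) =
      e * ((t : ℝ) * bprod α j - (s : ℝ) * bprod α (j + 1)) := by
    linear_combination (s : ℝ) * hθ1 + (t : ℝ) * hθ0 - α * h1' + h2'
  have hdn : dnear ((n : ℝ) * α) = |(t : ℝ) * bprod α j - (s : ℝ) * bprod α (j + 1)| := by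
    rw [hm, hkey, abs_mul, habse, one_mul]
  have hmain : |(t : ℝ) * bprod α j - (s : ℝ) * bprod α (j + 1)| <
      bprod α j - ((l : ℝ) - 1) * bprod α (j + 1) := by
    rw [← hdn]
    exact hdist.trans_le htarget
  rcases eq_or_ne t 0 with ht | ht
  · subst ht
    simp only [zero_mul, add_zero] at hst
    have hs1 : 1 ≤ s := by
      by_contra h
      push_neg at h
      linarith only [hst, hn0,
        mul_nonneg (by linarith only [h] : (0:ℤ) ≤ -s) (by linarith only [hq1] : (0:ℤ) ≤ q1)]
    have hsl : s ≤ l := by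
      by_contra h
      push_neg at h
      linarith only [hst, hn, hq01,
        mul_nonneg (by linarith only [h] : (0:ℤ) ≤ s - l - 1) (by linarith only [hq1] : (0:ℤ) ≤ q1)]
    have hsR : (1 : ℝ) ≤ (s : ℝ) := by exact_mod_cast hs1
    push_cast at hmain
    rw [zero_mul, zero_sub, abs_neg,
      abs_of_nonneg (mul_nonneg (by linarith only [hsR]) hB1.le)] at hmain
    have hsal : s ≤ a - l + 1 := by
      by_contra h
      push_neg at h
      have hsR2 : (a : ℝ) - (l : ℝ) + 2 ≤ (s : ℝ) := by
        have : a - l + 2 ≤ s := by omega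
        exact_mod_cast this
      linarith only [mul_nonneg (by linarith only [hsR2] : (0:ℝ) ≤ (s:ℝ) - ((a:ℝ) - (l:ℝ) + 2)) hB1.le,
        hmain, hrec, hlt2, hB1]
    exact ⟨s, hst.symm, hs1, le_min hsl hsal⟩
  · exfalso
    rcases lt_or_gt_of_ne ht with htneg | htpos
    · -- t ≤ -1
      have ht' : t ≤ -1 := by omega
      have hs1 : 1 ≤ s := by
        by_contra h
        push_neg at h
        linarith only [hst, hn0, hq0,
          mul_nonneg (by linarith only [h] : (0:ℤ) ≤ -s) (by linarith only [hq1] : (0:ℤ) ≤ q1),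
          mul_nonneg (by linarith only [ht'] : (0:ℤ) ≤ -t - 1) (by linarith only [hq0] : (0:ℤ) ≤ q0)]
      have htR : (t : ℝ) ≤ -1 := by exact_mod_cast ht'
      have hsR : (1 : ℝ) ≤ (s : ℝ) := by exact_mod_cast hs1
      linarith only [hmain, neg_le_abs ((t:ℝ) * bprod α j - (s:ℝ) * bprod α (j+1)),
        mul_nonneg (by linarith only [htR] : (0:ℝ) ≤ -(t:ℝ) - 1) hB0.le,
        mul_nonneg (by linarith only [hsR] : (0:ℝ) ≤ (s:ℝ) - 1) hB1.le,
        mul_nonneg (by linarith only [hlR] : (0:ℝ) ≤ (l:ℝ) - 1) hB1.le, hB0, hB1]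
    · -- t ≥ 1
      have ht' : 1 ≤ t := by omega
      have htR : (1 : ℝ) ≤ (t : ℝ) := by exact_mod_cast ht'
      rcases le_or_gt s 0 with hs | hs
      · have hsR : (s : ℝ) ≤ 0 := by exact_mod_cast hs
        linarith only [hmain, le_abs_self ((t:ℝ) * bprod α j - (s:ℝ) * bprod α (j+1)),
          mul_nonneg (by linarith only [htR] : (0:ℝ) ≤ (t:ℝ) - 1) hB0.le,
          mul_nonneg (by linarith only [hsR] : (0:ℝ) ≤ -(s:ℝ)) hB1.le,
          mul_nonneg (by linarith only [hlR] : (0:ℝ) ≤ (l:ℝ) - 1) hB1.le, hB0, hB1]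
      · have hsl : s ≤ l - 1 := by
          by_contra h
          push_neg at h
          linarith only [hst, hn,
            mul_nonneg (by linarith only [h] : (0:ℤ) ≤ s - l) (by linarith only [hq1] : (0:ℤ) ≤ q1),
            mul_nonneg (by linarith only [ht'] : (0:ℤ) ≤ t - 1) (by linarith only [hq0] : (0:ℤ) ≤ q0)]
        have hsR : (s : ℝ) ≤ (l : ℝ) - 1 := by
          have : (s : ℝ) ≤ ((l - 1 : ℤ) : ℝ) := by exact_mod_cast hsl
          push_cast at this
          linarith
        have hs0R : (1 : ℝ) ≤ (s : ℝ) := by exact_mod_cast hs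
        linarith only [hmain, le_abs_self ((t:ℝ) * bprod α j - (s:ℝ) * bprod α (j+1)),
          mul_nonneg (by linarith only [htR] : (0:ℝ) ≤ (t:ℝ) - 1) hB0.le,
          mul_nonneg (by linarith only [hsR] : (0:ℝ) ≤ (l:ℝ) - 1 - (s:ℝ)) hB1.le]
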